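/- Let M be an infinite subset of ℕ, ℱ a hereditary family of finite subsets of M, and ℒ a ξ-uniform family on M for some countable ordinal ξ. Then for every infinite subset M₁ of M there exists an infinite subset L of M₁ such that either ℒ_* ∩ [L]^{<ω} ⊆ ℱ, or ℱ ∩ [L]^{<ω} ⊆ ℒ* \ ℒ. -/

import Mathlib

open Ordinal Filter Set

/-- `FinLT s t` : every element of `s` is smaller than every element of `t`
(i.e. `max s < min t`, vacuously true if one of them is empty). -/
def FinLT (s t : Finset ℕ) : Prop := ∀ a ∈ s, ∀ b ∈ t, a < b

/-- `s` is an initial segment of `t`  (`s ⪯ t`). -/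
def InitSeg (s t : Finset ℕ) : Prop :=
  s ⊆ t ∧ ∀ a ∈ t, ∀ b ∈ s, a ≤ b → a ∈ s

/-- `s` is a proper initial segment of `t`  (`s ≺ t`). -/
def PInitSeg (s t : Finset ℕ) : Prop := InitSeg s t ∧ s ≠ t

/-- `[M]^{<ω}` : the finite subsets of `M`. -/
def FinSubs (M : Set ℕ) : Set (Finset ℕ) := {s | ↑s ⊆ M}

/-- `ℒ(m) = {s : {m} ∪ s ∈ ℒ and {m} < s}`. -/
def famAt (L : Set (Finset ℕ)) (m : ℕ) : Set (Finset ℕ) :=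
  {s | insert m s ∈ L ∧ ∀ a ∈ s, m < a}

/-- `ℒ*` : the family of initial segments of elements of `ℒ`. -/
def famStar (L : Set (Finset ℕ)) : Set (Finset ℕ) := {t | ∃ s ∈ L, InitSeg t s}

/-- `ℒ_*` : the family of subsets of elements of `ℒ`. -/
def famSub (L : Set (Finset ℕ)) : Set (Finset ℕ) := {t | ∃ s ∈ L, t ⊆ s}

/-- A family is Sperner if no element is a proper subset of another. -/
def Sperner (L : Set (Finset ℕ)) : Prop := ¬ ∃ s ∈ L, ∃ t ∈ L, s ⊂ t

/-- A family is hereditary if it is closed under taking subsets. -/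
def Hereditary (F : Set (Finset ℕ)) : Prop := ∀ s ∈ F, ∀ t ⊆ s, t ∈ F

/-- `IsUniform ξ ℒ M` : `ℒ` is a `ξ`-uniform family on `M`. -/
inductive IsUniform : Ordinal.{0} → Set (Finset ℕ) → Set ℕ → Prop
  | zero (M : Set ℕ) : IsUniform 0 {(∅ : Finset ℕ)} M
  | succ (ζ : Ordinal.{0}) (L : Set (Finset ℕ)) (M : Set ℕ)
      (hsub : L ⊆ FinSubs M) (hne : (∅ : Finset ℕ) ∉ L)
      (h : ∀ m ∈ M, IsUniform ζ (famAt L m) (M ∩ Set.Ioi m)) :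
      IsUniform (ζ + 1) L M
  | limit (ξ : Ordinal.{0}) (L : Set (Finset ℕ)) (M : Set ℕ)
      (hlim : Order.IsSuccLimit ξ)
      (hsub : L ⊆ FinSubs M) (hne : (∅ : Finset ℕ) ∉ L)
      (ξm : ℕ → Ordinal.{0})
      (hmono : ∀ m ∈ M, ∀ n ∈ M, m < n → ξm m < ξm n)
      (hlt : ∀ m ∈ M, ξm m < ξ)
      (hsup : ∀ β < ξ, ∃ m ∈ M, β ≤ ξm m)
      (h : ∀ m ∈ M, IsUniform (ξm m) (famAt L m) (M ∩ Set.Ioi m)) :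
      IsUniform ξ L M

/-- The characteristic function of a finite set, as an element of the
product space `ℕ → Bool` (i.e. `2^ℕ`). -/
def toChar (s : Finset ℕ) : ℕ → Bool := fun n => decide (n ∈ s)

/-- A family of finite subsets of `ℕ` is pointwise closed if its image in `2^ℕ`
(under characteristic functions) is closed in the product topology. -/
def PtwiseClosed (F : Set (Finset ℕ)) : Prop := IsClosed (toChar '' F)

/-- The first strong Cantor--Bendixson derivative of `F` on `M`:
the set of `A ∈ F ∩ [M]^{<ω}` such that `A` is a cluster point (in `2^ℕ`) of
`{B ∈ F : B ⊆ A ∪ L}` for every infinite `L ⊆ M`. -/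
def derivOne (M : Set ℕ) (F : Set (Finset ℕ)) : Set (Finset ℕ) :=
  {A | A ∈ F ∧ ↑A ⊆ M ∧ ∀ L : Set ℕ, L ⊆ M → L.Infinite →
    AccPt (toChar A) (𝓟 (toChar '' {B | B ∈ F ∧ ↑B ⊆ ↑A ∪ L}))}

/-- The iterated strong Cantor--Bendixson derivatives `(F)^ξ_M`. -/
noncomputable def CBDeriv (F : Set (Finset ℕ)) (M : Set ℕ) (o : Ordinal.{0}) :
    Set (Finset ℕ) :=
  Ordinal.limitRecOn o F (fun _ ih => derivOne M ih)
    (fun o _ ih => ⋂ (β : Ordinal.{0}) (h : β < o), ih β h)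

/-- The strong Cantor--Bendixson index `s_M(F)` : the least ordinal `ξ`
with `(F)^ξ_M = ∅`. -/
noncomputable def CBIndex (F : Set (Finset ℕ)) (M : Set ℕ) : Ordinal.{0} :=
  sInf {o : Ordinal.{0} | CBDeriv F M o = ∅}


section Aux

lemma inter_Ioi_infinite {s : Set ℕ} (hs : s.Infinite) (m : ℕ) : (s ∩ Set.Ioi m).Infinite := by
  have h1 : s \ Set.Iic m ⊆ s ∩ Set.Ioi m := by
    rintro x ⟨h1, h2⟩; exact ⟨h1, by simpa using h2⟩
  exact (hs.diff (Set.finite_Iic m)).mono h1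

lemma FinSubs_mono {L L' : Set ℕ} (h : L ⊆ L') : FinSubs L ⊆ FinSubs L' :=
  fun _ ht => Set.Subset.trans ht h

lemma uniform_subsets {ξ : Ordinal} {A : Set (Finset ℕ)} {M : Set ℕ}
    (h : IsUniform ξ A M) : A ⊆ FinSubs M := by
  cases h with
  | zero M =>
      intro s hs
      rw [Set.mem_singleton_iff] at hs
      subst hs
      intro x hx; simp at hx
  | succ ζ A M hsub hne h => exact hsub
  | limit ξ A M hlim hsub hne ξm hmono hlt hsup h => exact hsub

lemma uniform_nonempty : ∀ {ξ : Ordinal} {A : Set (Finset ℕ)} {M : Set ℕ},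
    IsUniform ξ A M → M.Infinite → A.Nonempty := by
  intro ξ A M h
  induction h with
  | zero M => exact fun _ => ⟨∅, Set.mem_singleton _⟩
  | succ ζ A M hsub hne h ih =>
      intro hM
      obtain ⟨m, hm⟩ := hM.nonempty
      obtain ⟨s, hs⟩ := ih m hm (inter_Ioi_infinite hM m)
      exact ⟨insert m s, hs.1⟩
  | limit ξ A M hlim hsub hne ξm hmono hlt hsup h ih =>
      intro hM
      obtain ⟨m, hm⟩ := hM.nonempty
      obtain ⟨s, hs⟩ := ih m hm (inter_Ioi_infinite hM m)
      exact ⟨insert m s, hs.1⟩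

lemma famAt_cases {ξ : Ordinal} {A : Set (Finset ℕ)} {M : Set ℕ}
    (h : IsUniform ξ A M) : ∀ m ∈ M, famAt A m = ∅ ∨
      ∃ δ < ξ, IsUniform δ (famAt A m) (M ∩ Set.Ioi m) := by
  cases h with
  | zero M =>
      intro m _
      left
      rw [Set.eq_empty_iff_forall_notMem]
      intro s hs
      exact Finset.insert_ne_empty m s (Set.mem_singleton_iff.mp hs.1)
  | succ ζ A M hsub hne h =>
      intro m hm
      right
      exact ⟨ζ, by rw [Ordinal.add_one_eq_succ]; exact Order.lt_succ ζ, h m hm⟩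
  | limit ξ A M hlim hsub hne ξm hmono hlt hsup h =>
      intro m hm
      right
      exact ⟨ξm m, hlt m hm, h m hm⟩

/-- Iterated section of a family along a finite chain. -/
def famAtC (A : Set (Finset ℕ)) (c : Finset ℕ) : Set (Finset ℕ) :=
  {u | c ∪ u ∈ A ∧ ∀ a ∈ c, ∀ b ∈ u, a < b}

lemma famAtC_singleton (A : Set (Finset ℕ)) (m : ℕ) : famAtC A {m} = famAt A m := by
  ext u
  simp [famAtC, famAt, ← Finset.insert_eq]

lemma famAtC_empty_family (c : Finset ℕ) : famAtC (∅ : Set (Finset ℕ)) c = ∅ := by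
  ext u; simp [famAtC]

lemma famAtC_insert (A : Set (Finset ℕ)) (c : Finset ℕ) (m : ℕ)
    (hm : ∀ x ∈ c, m < x) :
    famAtC A (insert m c) = famAtC (famAt A m) c := by
  ext u
  simp only [famAtC, famAt, Set.mem_setOf_eq, Finset.insert_union, Finset.mem_insert,
    Finset.mem_union]
  constructor
  · rintro ⟨h1, h2⟩
    refine ⟨⟨h1, ?_⟩, ?_⟩
    · rintro b hb
      rcases hb with hb | hb
      · exact hm b hb
      · exact h2 m (Or.inl rfl) b hb
    · intro a ha b hb
      exact h2 a (Or.inr ha) b hb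
  · rintro ⟨⟨h1, h2⟩, h3⟩
    refine ⟨h1, ?_⟩
    rintro a (rfl | ha) b hb
    · exact h2 b (Or.inr hb)
    · exact h3 a ha b hb

end Aux
section Peel

lemma inter_Ioi_inter_Ioi {M : Set ℕ} {a b : ℕ} (h : a ≤ b) :
    (M ∩ Set.Ioi a) ∩ Set.Ioi b = M ∩ Set.Ioi b := by
  ext x
  simp only [Set.mem_inter_iff, Set.mem_Ioi]
  constructor
  · rintro ⟨⟨h1, _⟩, h2⟩; exact ⟨h1, h2⟩
  · rintro ⟨h1, h2⟩; exact ⟨⟨h1, lt_of_le_of_lt h h2⟩, h2⟩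

lemma peel : ∀ (ξ : Ordinal) (A : Set (Finset ℕ)) (M : Set ℕ), IsUniform ξ A M →
    ∀ c : Finset ℕ, ↑c ⊆ M → ∀ m ∈ c, (∀ x ∈ c, x ≤ m) →
    famAtC A c = ∅ ∨ ∃ δ < ξ, IsUniform δ (famAtC A c) (M ∩ Set.Ioi m) := by
  intro ξ
  induction ξ using Ordinal.induction with
  | h ξ IH =>
    intro A M hA c hcM m hmc hmax
    have hcne : c.Nonempty := ⟨m, hmc⟩
    set m0 := c.min' hcne with hm0
    have hm0c : m0 ∈ c := c.min'_mem hcne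
    have hm0M : m0 ∈ M := hcM hm0c
    by_cases hsing : c.erase m0 = ∅
    · -- c = {m0}, and then m = m0
      have hcs : c = {m0} := by
        ext x
        simp only [Finset.mem_singleton]
        constructor
        · intro hx
          by_contra hne
          exact (Finset.eq_empty_iff_forall_notMem.mp hsing x)
            (Finset.mem_erase.mpr ⟨hne, hx⟩)
        · rintro rfl; exact hm0c
      have hmm0 : m = m0 := by
        have := hcs ▸ hmc; simpa using this
      rw [hcs, famAtC_singleton, hmm0]
      exact famAt_cases hA m0 hm0M
    · -- c has at least two elements
      have hcne' : (c.erase m0).Nonempty := Finset.nonempty_iff_ne_empty.mpr hsing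
      have hlt' : ∀ x ∈ c.erase m0, m0 < x := by
        intro x hx
        rcases Finset.mem_erase.mp hx with ⟨hne, hxc⟩
        exact lt_of_le_of_ne (c.min'_le x hxc) (Ne.symm hne)
      have hinsert : insert m0 (c.erase m0) = c := Finset.insert_erase hm0c
      have hsplit : famAtC A c = famAtC (famAt A m0) (c.erase m0) := by
        rw [← hinsert, famAtC_insert A (c.erase m0) m0 hlt', hinsert]
      have hm0m : m0 ≤ m := c.min'_le m hmc
      have hmerase : m ∈ c.erase m0 := by
        refine Finset.mem_erase.mpr ⟨?_, hmc⟩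
        intro hmm0
        obtain ⟨x, hx⟩ := hcne'
        rcases Finset.mem_erase.mp hx with ⟨hne, hxc⟩
        exact hne (le_antisymm (hmm0 ▸ hmax x hxc) (c.min'_le x hxc))
      rcases famAt_cases hA m0 hm0M with hemp | ⟨δ0, hδ0, hu0⟩
      · left; rw [hsplit, hemp, famAtC_empty_family]
      · have hsubc : ↑(c.erase m0) ⊆ M ∩ Set.Ioi m0 := by
          intro x hx
          have hx' : x ∈ c.erase m0 := hx
          exact ⟨hcM (Finset.mem_erase.mp hx').2, hlt' x hx'⟩
        have hmax' : ∀ x ∈ c.erase m0, x ≤ m := fun x hx => hmax x (Finset.mem_erase.mp hx).2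
        rcases IH δ0 hδ0 (famAt A m0) (M ∩ Set.Ioi m0) hu0 (c.erase m0) hsubc m hmerase hmax'
          with hemp | ⟨δ, hδ, hu⟩
        · left; rw [hsplit]; exact hemp
        · right
          refine ⟨δ, lt_trans hδ hδ0, ?_⟩
          rw [hsplit]
          rw [inter_Ioi_inter_Ioi hm0m] at hu
          exact hu

lemma peel3 (A : Set (Finset ℕ)) (M : Set ℕ) (σ : ℕ → Ordinal)
    (hσ : ∀ m ∈ M, IsUniform (σ m) (famAt A m) (M ∩ Set.Ioi m))
    (c : Finset ℕ) (hcM : ↑c ⊆ M) (m : ℕ) (hmc : m ∈ c) (hmax : ∀ x ∈ c, x ≤ m)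
    (hne : c ≠ {m}) :
    famAtC A c = ∅ ∨ ∃ m0 ∈ M, m0 < m ∧ ∃ δ < σ m0,
      IsUniform δ (famAtC A c) (M ∩ Set.Ioi m) := by
  have hcne : c.Nonempty := ⟨m, hmc⟩
  set m0 := c.min' hcne with hm0
  have hm0c : m0 ∈ c := c.min'_mem hcne
  have hm0M : m0 ∈ M := hcM hm0c
  have hm0m : m0 < m := by
    rcases lt_or_eq_of_le (c.min'_le m hmc) with h | h
    · exact h
    · exfalso
      apply hne
      ext x
      simp only [Finset.mem_singleton]
      constructor
      · intro hx
        exact le_antisymm (hmax x hx) (h ▸ c.min'_le x hx)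
      · rintro rfl; exact hmc
  have hlt' : ∀ x ∈ c.erase m0, m0 < x := by
    intro x hx
    rcases Finset.mem_erase.mp hx with ⟨hne', hxc⟩
    exact lt_of_le_of_ne (c.min'_le x hxc) (Ne.symm hne')
  have hinsert : insert m0 (c.erase m0) = c := Finset.insert_erase hm0c
  have hsplit : famAtC A c = famAtC (famAt A m0) (c.erase m0) := by
    rw [← hinsert, famAtC_insert A (c.erase m0) m0 hlt', hinsert]
  have hmerase : m ∈ c.erase m0 := Finset.mem_erase.mpr ⟨ne_of_gt hm0m, hmc⟩
  have hsubc : ↑(c.erase m0) ⊆ M ∩ Set.Ioi m0 := by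
    intro x hx
    have hx' : x ∈ c.erase m0 := hx
    exact ⟨hcM (Finset.mem_erase.mp hx').2, hlt' x hx'⟩
  have hmax' : ∀ x ∈ c.erase m0, x ≤ m := fun x hx => hmax x (Finset.mem_erase.mp hx).2
  rcases peel (σ m0) (famAt A m0) (M ∩ Set.Ioi m0) (hσ m0 hm0M) (c.erase m0) hsubc m
    hmerase hmax' with hemp | ⟨δ, hδ, hu⟩
  · left; rw [hsplit]; exact hemp
  · right
    refine ⟨m0, hm0M, hm0m, δ, hδ, ?_⟩
    rw [hsplit]
    rw [inter_Ioi_inter_Ioi (le_of_lt hm0m)] at hu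
    exact hu

end Peel
section Diag

/-- Generic diagonalization lemma. -/
lemma GDL (M₁ : Set ℕ) (h₁ : M₁.Infinite) (Q : ℕ → Set ℕ → Prop)
    (hmono : ∀ m (N N' : Set ℕ), N' ⊆ N → Q m N → Q m N')
    (hstep : ∀ N : Set ℕ, N ⊆ M₁ → N.Infinite → ∀ m ∈ N,
      ∃ N', N' ⊆ N ∩ Set.Ioi m ∧ N'.Infinite ∧ Q m N') :
    ∃ L, L ⊆ M₁ ∧ L.Infinite ∧ ∀ m ∈ L, Q m (L ∩ Set.Ioi m) := by
  classical
  have pick : ∀ N : {N : Set ℕ // N ⊆ M₁ ∧ N.Infinite},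
      ∃ (m : ℕ) (N' : Set ℕ), m ∈ N.1 ∧ N' ⊆ N.1 ∩ Set.Ioi m ∧ N'.Infinite ∧ Q m N' := by
    rintro ⟨N, hN1, hN2⟩
    obtain ⟨m, hm⟩ := hN2.nonempty
    obtain ⟨N', h1, h2, h3⟩ := hstep N hN1 hN2 m hm
    exact ⟨m, N', hm, h1, h2, h3⟩
  choose a' b' h1 h2 h3 h4 using pick
  let nextS : {N : Set ℕ // N ⊆ M₁ ∧ N.Infinite} → {N : Set ℕ // N ⊆ M₁ ∧ N.Infinite} :=
    fun N => ⟨b' N, ((h2 N).trans Set.inter_subset_left).trans N.2.1, h3 N⟩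
  let seq : ℕ → {N : Set ℕ // N ⊆ M₁ ∧ N.Infinite} :=
    fun n => nextS^[n] ⟨M₁, subset_rfl, h₁⟩
  have hsucc : ∀ n, seq (n + 1) = nextS (seq n) := fun n =>
    Function.iterate_succ_apply' nextS n _
  set a : ℕ → ℕ := fun n => a' (seq n) with ha
  have ha_mem : ∀ n, a n ∈ (seq n).1 := fun n => h1 (seq n)
  have hsub : ∀ n, (seq (n + 1)).1 ⊆ (seq n).1 ∩ Set.Ioi (a n) := by
    intro n; rw [hsucc n]; exact h2 (seq n)
  have hQn : ∀ n, Q (a n) (seq (n + 1)).1 := by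
    intro n; rw [hsucc n]; exact h4 (seq n)
  have hdesc : ∀ i j, i ≤ j → (seq j).1 ⊆ (seq i).1 := by
    intro i j hij
    induction j, hij using Nat.le_induction with
    | base => exact subset_rfl
    | succ j hij ih => exact ((hsub j).trans Set.inter_subset_left).trans ih
  have hmonoa : StrictMono a := by
    apply strictMono_nat_of_lt_succ
    intro n
    exact ((hsub n) (ha_mem (n + 1))).2
  refine ⟨Set.range a, ?_, ?_, ?_⟩
  · rintro x ⟨n, rfl⟩
    exact (seq n).2.1 (ha_mem n)
  · exact Set.infinite_range_of_injective hmonoa.injective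
  · rintro x ⟨n, rfl⟩
    refine hmono _ _ _ ?_ (hQn n)
    rintro y ⟨⟨j, rfl⟩, hy⟩
    have hnj : n < j := hmonoa.lt_iff_lt.mp hy
    exact hdesc (n + 1) j hnj (ha_mem j)

/-- Finitely many shrinking tasks can be performed simultaneously. -/
lemma FS {χ : Type} (X : Set ℕ) (ι : Finset χ) (P : χ → Set ℕ → Prop)
    (hmono : ∀ c (N N' : Set ℕ), N' ⊆ N → P c N → P c N') :
    (∀ c ∈ ι, ∀ N : Set ℕ, N ⊆ X → N.Infinite → ∃ N', N' ⊆ N ∧ N'.Infinite ∧ P c N') →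
    ∀ N : Set ℕ, N ⊆ X → N.Infinite → ∃ N', N' ⊆ N ∧ N'.Infinite ∧ ∀ c ∈ ι, P c N' := by
  classical
  induction ι using Finset.induction_on with
  | empty =>
      intro _ N hNX hNinf
      exact ⟨N, subset_rfl, hNinf, by simp⟩
  | insert _ _ hni ih =>
      rename_i d ι'
      intro hprov N hNX hNinf
      obtain ⟨N₁, hN₁sub, hN₁inf, hN₁P⟩ :=
        ih (fun c hc => hprov c (Finset.mem_insert_of_mem hc)) N hNX hNinf
      obtain ⟨N₂, hN₂sub, hN₂inf, hN₂P⟩ :=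
        hprov d (Finset.mem_insert_self d ι') N₁ (hN₁sub.trans hNX) hN₁inf
      refine ⟨N₂, hN₂sub.trans hN₁sub, hN₂inf, ?_⟩
      intro c hc
      rcases Finset.mem_insert.mp hc with rfl | hc
      · exact hN₂P
      · exact hmono c N₁ N₂ hN₂sub (hN₁P c hc)

end Diag
section Fstar

lemma filter_le_union_filter_gt (s : Finset ℕ) (m : ℕ) :
    s.filter (· ≤ m) ∪ s.filter (fun x => m < x) = s := by
  ext x
  simp only [Finset.mem_union, Finset.mem_filter]
  constructor
  · rintro (⟨h, _⟩ | ⟨h, _⟩) <;> exact h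
  · intro hx
    rcases le_or_gt x m with h | h
    · exact Or.inl ⟨hx, h⟩
    · exact Or.inr ⟨hx, h⟩

lemma erase_min'_subset_filter {t s : Finset ℕ} (ht : t.Nonempty) (hts : t ⊆ s) :
    t.erase (t.min' ht) ⊆ s.filter (fun x => t.min' ht < x) := by
  intro x hx
  rcases Finset.mem_erase.mp hx with ⟨hne, hxt⟩
  exact Finset.mem_filter.mpr ⟨hts hxt, lt_of_le_of_ne (t.min'_le x hxt) (Ne.symm hne)⟩

lemma famSub_empty : famSub (∅ : Set (Finset ℕ)) = ∅ := by
  ext t; simp [famSub]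

/-- Key domination lemma: if `A` is `α`-uniform and `B` is `β`-uniform with
`α < β`, then on a suitable infinite subset, `famSub A ⊆ famSub B`. -/
lemma Fstar : ∀ (β α : Ordinal), α < β →
    ∀ (A : Set (Finset ℕ)) (MA : Set ℕ), IsUniform α A MA →
    ∀ (B : Set (Finset ℕ)) (MB : Set ℕ), IsUniform β B MB → MB.Infinite →
    ∀ M₁ : Set ℕ, M₁ ⊆ MB → M₁.Infinite →
    ∃ L, L ⊆ M₁ ∧ L.Infinite ∧ famSub A ∩ FinSubs L ⊆ famSub B := by
  intro β
  induction β using Ordinal.induction with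
  | h β IH =>
    intro α hαβ A MA hA B MB hB hMBinf M₁ hM₁ hM₁inf
    -- extract section data
    have pack : ∃ (M₁' : Set ℕ) (σ : ℕ → Ordinal), M₁' ⊆ M₁ ∧ M₁'.Infinite ∧
        ∀ m ∈ M₁', α ≤ σ m ∧ σ m < β ∧ IsUniform (σ m) (famAt B m) (MB ∩ Set.Ioi m) := by
      cases hB with
      | zero M => exact absurd hαβ (not_lt_of_ge (zero_le (a := α)))
      | succ ζ B MB hsub hne h =>
          refine ⟨M₁, fun _ => ζ, subset_rfl, hM₁inf, ?_⟩
          intro m hm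
          have hαζ : α ≤ ζ := by
            rw [Ordinal.add_one_eq_succ] at hαβ; exact Order.lt_succ_iff.mp hαβ
          exact ⟨hαζ, by rw [Ordinal.add_one_eq_succ]; exact Order.lt_succ ζ, h m (hM₁ hm)⟩
      | limit ξ B MB hlim hsub hne ξm hmono hlt hsup h =>
          obtain ⟨mstar, hmstarMB, hmstar⟩ := hsup α hαβ
          refine ⟨M₁ ∩ Set.Ioi mstar, ξm, Set.inter_subset_left,
            inter_Ioi_infinite hM₁inf mstar, ?_⟩
          rintro m ⟨hmM₁, hmgt⟩
          have hmMB : m ∈ MB := hM₁ hmM₁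
          refine ⟨le_of_lt (lt_of_le_of_lt hmstar (hmono mstar hmstarMB m hmMB hmgt)),
            hlt m hmMB, h m hmMB⟩
    obtain ⟨M₁', σ, hM₁'sub, hM₁'inf, hσ⟩ := pack
    have hM₁'MB : M₁' ⊆ MB := hM₁'sub.trans hM₁
    -- diagonalization
    obtain ⟨L, hLsub, hLinf, hLQ⟩ := GDL M₁' hM₁'inf
      (fun m N' => ∀ c ∈ (Finset.Iic m).powerset, m ∈ c → ↑c ⊆ MA →
        famSub (famAtC A c) ∩ FinSubs N' ⊆ famSub (famAt B m))
      (by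
        intro m N N' hsub hQ c hc h1 h2
        exact (Set.inter_subset_inter_right _ (FinSubs_mono hsub)).trans (hQ c hc h1 h2))
      (by
        intro N hN hNinf m hm
        have hmM₁' : m ∈ M₁' := hN hm
        obtain ⟨hασ, hσβ, hσu⟩ := hσ m hmM₁'
        have hMBIoi : (MB ∩ Set.Ioi m).Infinite := inter_Ioi_infinite hMBinf m
        have hprov : ∀ c ∈ (Finset.Iic m).powerset, ∀ N'' : Set ℕ,
            N'' ⊆ MB ∩ Set.Ioi m → N''.Infinite →
            ∃ N', N' ⊆ N'' ∧ N'.Infinite ∧ (m ∈ c → ↑c ⊆ MA →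
              famSub (famAtC A c) ∩ FinSubs N' ⊆ famSub (famAt B m)) := by
          intro c _ N'' hN''sub hN''inf
          by_cases hcond : m ∈ c ∧ ↑c ⊆ MA
          · obtain ⟨h1, h2⟩ := hcond
            have hmax : ∀ x ∈ c, x ≤ m := by
              intro x hx
              exact Finset.mem_Iic.mp (Finset.mem_powerset.mp ‹c ∈ (Finset.Iic m).powerset› hx)
            rcases peel α A MA hA c h2 m h1 hmax with hemp | ⟨δ, hδα, hδu⟩
            · refine ⟨N'', subset_rfl, hN''inf, fun _ _ => ?_⟩
              rw [hemp, famSub_empty]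
              exact fun t ht => absurd ht.1 (Set.notMem_empty t)
            · obtain ⟨L', hL'1, hL'2, hL'3⟩ := IH (σ m) hσβ δ (lt_of_lt_of_le hδα hασ)
                (famAtC A c) (MA ∩ Set.Ioi m) hδu (famAt B m) (MB ∩ Set.Ioi m) hσu
                hMBIoi N'' hN''sub hN''inf
              exact ⟨L', hL'1, hL'2, fun _ _ => hL'3⟩
          · exact ⟨N'', subset_rfl, hN''inf, fun ha hb => absurd ⟨ha, hb⟩ hcond⟩
        obtain ⟨N', hN'1, hN'2, hN'3⟩ := FS (MB ∩ Set.Ioi m) ((Finset.Iic m).powerset)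
          (fun c N' => m ∈ c → ↑c ⊆ MA →
            famSub (famAtC A c) ∩ FinSubs N' ⊆ famSub (famAt B m))
          (by
            intro c N N' hsub hP h1 h2
            exact (Set.inter_subset_inter_right _ (FinSubs_mono hsub)).trans (hP h1 h2))
          hprov (N ∩ Set.Ioi m)
          (fun x hx => ⟨hM₁'MB (hN hx.1), hx.2⟩) (inter_Ioi_infinite hNinf m)
        exact ⟨N', hN'1, hN'2, hN'3⟩)
    refine ⟨L, hLsub.trans hM₁'sub, hLinf, ?_⟩
    rintro t ⟨⟨s, hsA, hts⟩, htL⟩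
    rcases t.eq_empty_or_nonempty with rfl | htne
    · obtain ⟨s0, hs0⟩ := uniform_nonempty hB hMBinf
      exact ⟨s0, hs0, Finset.empty_subset s0⟩
    · set m := t.min' htne with hm
      have hmt : m ∈ t := t.min'_mem htne
      have hmL : m ∈ L := htL hmt
      have hms : m ∈ s := hts hmt
      set c := s.filter (· ≤ m) with hc
      have hcIic : c ∈ (Finset.Iic m).powerset := by
        refine Finset.mem_powerset.mpr ?_
        intro x hx
        exact Finset.mem_Iic.mpr (Finset.mem_filter.mp hx).2
      have hmc : m ∈ c := Finset.mem_filter.mpr ⟨hms, le_refl m⟩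
      have hcMA : ↑c ⊆ MA := by
        intro x hx
        rcases hx with hx
        exact uniform_subsets hA hsA (Finset.filter_subset _ s hx)
      set u := s.filter (fun x => m < x) with hu
      have huC : u ∈ famAtC A c := by
        refine ⟨?_, ?_⟩
        · show s.filter (· ≤ m) ∪ s.filter (fun x => m < x) ∈ A
          rw [filter_le_union_filter_gt s m]
          exact hsA
        · intro a ha b hb
          exact lt_of_le_of_lt (Finset.mem_filter.mp ha).2 (Finset.mem_filter.mp hb).2
      have hteu : t.erase m ⊆ u := erase_min'_subset_filter htne hts
      have hteL : ↑(t.erase m) ⊆ L ∩ Set.Ioi m := by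
        intro x hx
        rcases hx with hx
        rcases Finset.mem_erase.mp hx with ⟨hne, hxt⟩
        exact ⟨htL hxt, lt_of_le_of_ne (t.min'_le x hxt) (Ne.symm hne)⟩
      have hkey := hLQ m hmL c hcIic hmc hcMA ⟨⟨u, huC, hteu⟩, hteL⟩
      obtain ⟨v, hv, htev⟩ := hkey
      refine ⟨insert m v, hv.1, ?_⟩
      intro x hx
      rcases eq_or_ne x m with rfl | hxm
      · exact Finset.mem_insert_self _ v
      · exact Finset.mem_insert_of_mem (htev (Finset.mem_erase.mpr ⟨hxm, hx⟩))

end Fstar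
section Main

lemma hered_famAt {F : Set (Finset ℕ)} (hF : Hereditary F) (m : ℕ) :
    Hereditary (famAt F m) := by
  rintro s ⟨hs1, hs2⟩ t hts
  exact ⟨hF _ hs1 (insert m t) (Finset.insert_subset_insert m hts),
    fun a ha => hs2 a (hts ha)⟩

theorem mainT : ∀ (ξ : Ordinal) (𝓛 : Set (Finset ℕ)) (M : Set ℕ),
    IsUniform ξ 𝓛 M → M.Infinite →
    ∀ F : Set (Finset ℕ), Hereditary F →
    ∀ M₁ : Set ℕ, M₁ ⊆ M → M₁.Infinite →
    ∃ L, L ⊆ M₁ ∧ L.Infinite ∧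
      (famSub 𝓛 ∩ FinSubs L ⊆ F ∨ F ∩ FinSubs L ⊆ famStar 𝓛 \ 𝓛) := by
  intro ξ
  induction ξ using Ordinal.induction with
  | h ξ IH =>
    intro 𝓛 M h𝓛 hM F hF M₁ hM₁ hM₁inf
    by_cases hEF : (∅ : Finset ℕ) ∈ F
    case neg =>
      refine ⟨M₁, subset_rfl, hM₁inf, Or.inr ?_⟩
      rintro t ⟨htF, -⟩
      exact absurd (hF t htF ∅ (Finset.empty_subset t)) hEF
    have pack : 𝓛 = {(∅ : Finset ℕ)} ∨ ((∅ : Finset ℕ) ∉ 𝓛 ∧ ∃ σ : ℕ → Ordinal,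
        (∀ m ∈ M, σ m < ξ ∧ IsUniform (σ m) (famAt 𝓛 m) (M ∩ Set.Ioi m)) ∧
        (∀ a ∈ M, ∀ b ∈ M, a < b → σ a ≤ σ b)) := by
      cases h𝓛 with
      | zero M => exact Or.inl rfl
      | succ ζ 𝓛 M hsub hne h =>
          refine Or.inr ⟨hne, fun _ => ζ, ?_, fun _ _ _ _ _ => le_refl ζ⟩
          intro m hm
          exact ⟨by rw [Ordinal.add_one_eq_succ]; exact Order.lt_succ ζ, h m hm⟩
      | limit ξ 𝓛 M hlim hsub hne ξm hmono hlt hsup h =>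
          refine Or.inr ⟨hne, ξm, fun m hm => ⟨hlt m hm, h m hm⟩,
            fun a ha b hb hab => le_of_lt (hmono a ha b hb hab)⟩
    rcases pack with rfl | ⟨hEL, σ, hσ, hσmono⟩
    · refine ⟨M₁, subset_rfl, hM₁inf, Or.inl ?_⟩
      rintro t ⟨⟨s, hs, hts⟩, -⟩
      rw [Set.mem_singleton_iff] at hs
      subst hs
      rw [Finset.subset_empty] at hts
      subst hts
      exact hEF
    -- main case
    obtain ⟨L₀, hL₀sub, hL₀inf, hL₀Q⟩ := GDL M₁ hM₁inf
      (fun m N' =>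
        ((famSub (famAt 𝓛 m) ∩ FinSubs N' ⊆ famAt F m) ∨
         (famAt F m ∩ FinSubs N' ⊆ famStar (famAt 𝓛 m) \ famAt 𝓛 m)) ∧
        ∀ c ∈ (Finset.Iic m).powerset, m ∈ c → ↑c ⊆ M → c ≠ {m} →
          famSub (famAtC 𝓛 c) ∩ FinSubs N' ⊆ famSub (famAt 𝓛 m))
      (by
        rintro m N N' hsub ⟨halt, hchain⟩
        constructor
        · rcases halt with h | h
          · exact Or.inl ((Set.inter_subset_inter_right _ (FinSubs_mono hsub)).trans h)
          · exact Or.inr ((Set.inter_subset_inter_right _ (FinSubs_mono hsub)).trans h)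
        · intro c hc h1 h2 h3
          exact (Set.inter_subset_inter_right _ (FinSubs_mono hsub)).trans (hchain c hc h1 h2 h3))
      (by
        intro N hN hNinf m hm
        have hmM : m ∈ M := hM₁ (hN hm)
        obtain ⟨hσlt, hσu⟩ := hσ m hmM
        have hMIoi : (M ∩ Set.Ioi m).Infinite := inter_Ioi_infinite hM m
        -- (a) induction hypothesis for the section at m
        obtain ⟨L₁, hL₁sub, hL₁inf, hL₁alt⟩ := IH (σ m) hσlt (famAt 𝓛 m) (M ∩ Set.Ioi m)
          hσu hMIoi (famAt F m) (hered_famAt hF m) (N ∩ Set.Ioi m)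
          (fun x hx => ⟨hM₁ (hN hx.1), hx.2⟩) (inter_Ioi_infinite hNinf m)
        -- (b) chain tasks
        have hprov : ∀ c ∈ (Finset.Iic m).powerset, ∀ N'' : Set ℕ,
            N'' ⊆ M ∩ Set.Ioi m → N''.Infinite →
            ∃ N', N' ⊆ N'' ∧ N'.Infinite ∧ (m ∈ c → ↑c ⊆ M → c ≠ {m} →
              famSub (famAtC 𝓛 c) ∩ FinSubs N' ⊆ famSub (famAt 𝓛 m)) := by
          intro c hcp N'' hN''sub hN''inf
          by_cases hcond : m ∈ c ∧ ↑c ⊆ M ∧ c ≠ {m}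
          · obtain ⟨h1, h2, h3⟩ := hcond
            have hmax : ∀ x ∈ c, x ≤ m := fun x hx =>
              Finset.mem_Iic.mp (Finset.mem_powerset.mp hcp hx)
            rcases peel3 𝓛 M (fun m' => σ m') (fun m' hm' => (hσ m' hm').2) c h2 m h1 hmax h3
              with hemp | ⟨m0, hm0M, hm0m, δ, hδ, hδu⟩
            · refine ⟨N'', subset_rfl, hN''inf, fun _ _ _ => ?_⟩
              rw [hemp, famSub_empty]
              exact fun t ht => absurd ht.1 (Set.notMem_empty t)
            · have hδσm : δ < σ m := lt_of_lt_of_le hδ (hσmono m0 hm0M m hmM hm0m)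
              obtain ⟨L', hL'1, hL'2, hL'3⟩ := Fstar (σ m) δ hδσm
                (famAtC 𝓛 c) (M ∩ Set.Ioi m) hδu (famAt 𝓛 m) (M ∩ Set.Ioi m) hσu
                hMIoi N'' hN''sub hN''inf
              exact ⟨L', hL'1, hL'2, fun _ _ _ => hL'3⟩
          · refine ⟨N'', subset_rfl, hN''inf, fun ha hb hc => absurd ⟨ha, hb, hc⟩ hcond⟩
        obtain ⟨N', hN'1, hN'2, hN'3⟩ := FS (M ∩ Set.Ioi m) ((Finset.Iic m).powerset)
          (fun c N' => m ∈ c → ↑c ⊆ M → c ≠ {m} →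
            famSub (famAtC 𝓛 c) ∩ FinSubs N' ⊆ famSub (famAt 𝓛 m))
          (by
            intro c N N' hsub hP h1 h2 h3
            exact (Set.inter_subset_inter_right _ (FinSubs_mono hsub)).trans (hP h1 h2 h3))
          hprov L₁ (hL₁sub.trans (fun x hx => ⟨hM₁ (hN hx.1), hx.2⟩)) hL₁inf
        refine ⟨N', hN'1.trans hL₁sub, hN'2, ?_, hN'3⟩
        rcases hL₁alt with h | h
        · exact Or.inl ((Set.inter_subset_inter_right _
            (FinSubs_mono (hN'1))).trans h)
        · exact Or.inr ((Set.inter_subset_inter_right _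
            (FinSubs_mono (hN'1))).trans h))
    -- pigeonhole on which alternative holds
    set Aset : Set ℕ := {m | m ∈ L₀ ∧
      famSub (famAt 𝓛 m) ∩ FinSubs (L₀ ∩ Set.Ioi m) ⊆ famAt F m} with hAdef
    by_cases hAinf : Aset.Infinite
    · -- first alternative
      refine ⟨Aset, fun x hx => hL₀sub hx.1, hAinf, Or.inl ?_⟩
      rintro t ⟨⟨s, hsL, hts⟩, htL⟩
      rcases t.eq_empty_or_nonempty with rfl | htne
      · exact hEF
      set m := t.min' htne with hm
      have hmt : m ∈ t := t.min'_mem htne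
      have hmA : m ∈ Aset := htL hmt
      have hmL₀ : m ∈ L₀ := hmA.1
      obtain ⟨-, hchain⟩ := hL₀Q m hmL₀
      have hms : m ∈ s := hts hmt
      set c := s.filter (· ≤ m) with hc
      have hcIic : c ∈ (Finset.Iic m).powerset :=
        Finset.mem_powerset.mpr fun x hx => Finset.mem_Iic.mpr (Finset.mem_filter.mp hx).2
      have hmc : m ∈ c := Finset.mem_filter.mpr ⟨hms, le_refl m⟩
      have hcM : ↑c ⊆ M := fun x hx =>
        uniform_subsets h𝓛 hsL (Finset.filter_subset _ s hx)
      set u := s.filter (fun x => m < x) with hu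
      have hcu : c ∪ u = s := by rw [hc, hu]; exact filter_le_union_filter_gt s m
      have hsu : u ∈ famAtC 𝓛 c := by
        refine ⟨by rw [hcu]; exact hsL, ?_⟩
        intro a ha b hb
        exact lt_of_le_of_lt (Finset.mem_filter.mp ha).2 (Finset.mem_filter.mp hb).2
      have hteu : t.erase m ⊆ u := erase_min'_subset_filter htne hts
      have hteL : ↑(t.erase m) ⊆ L₀ ∩ Set.Ioi m := by
        intro x hx
        rcases hx with hx
        rcases Finset.mem_erase.mp hx with ⟨hne, hxt⟩
        exact ⟨(htL hxt).1, lt_of_le_of_ne (t.min'_le x hxt) (Ne.symm hne)⟩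
      have hkey : t.erase m ∈ famSub (famAt 𝓛 m) := by
        by_cases hsing : c = {m}
        · refine ⟨u, ⟨?_, fun b hb => (Finset.mem_filter.mp hb).2⟩, hteu⟩
          have hins : insert m u = s := by
            rw [Finset.insert_eq, ← hsing]; exact hcu
          rw [hins]; exact hsL
        · exact hchain c hcIic hmc hcM hsing ⟨⟨u, hsu, hteu⟩, hteL⟩
      have hfinal := hmA.2 ⟨hkey, hteL⟩
      have hins : insert m (t.erase m) ∈ F := hfinal.1
      rw [Finset.insert_erase hmt] at hins
      exact hins
    · -- second alternative
      have hBinf : (L₀ \ Aset).Infinite := by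
        rw [Set.not_infinite] at hAinf
        by_contra hB
        rw [Set.not_infinite] at hB
        refine hL₀inf ((hAinf.union hB).subset ?_)
        intro x hx
        by_cases hxA : x ∈ Aset
        · exact Or.inl hxA
        · exact Or.inr ⟨hx, hxA⟩
      refine ⟨L₀ \ Aset, fun x hx => hL₀sub hx.1, hBinf, Or.inr ?_⟩
      rintro t ⟨htF, htL⟩
      rcases t.eq_empty_or_nonempty with rfl | htne
      · obtain ⟨s0, hs0⟩ := uniform_nonempty h𝓛 hM
        exact ⟨⟨s0, hs0, Finset.empty_subset s0,
          fun a _ b hb _ => absurd hb (Finset.notMem_empty b)⟩, hEL⟩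
      set m := t.min' htne with hm
      have hmt : m ∈ t := t.min'_mem htne
      have hmB := htL hmt
      have hmL₀ : m ∈ L₀ := hmB.1
      obtain ⟨halt, -⟩ := hL₀Q m hmL₀
      have hright : famAt F m ∩ FinSubs (L₀ ∩ Set.Ioi m) ⊆
          famStar (famAt 𝓛 m) \ famAt 𝓛 m := by
        rcases halt with h | h
        · exact absurd ⟨hmL₀, h⟩ hmB.2
        · exact h
      have hlt' : ∀ a ∈ t.erase m, m < a := by
        intro a ha
        rcases Finset.mem_erase.mp ha with ⟨hne, hat⟩
        exact lt_of_le_of_ne (t.min'_le a hat) (Ne.symm hne)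
      have hteF : t.erase m ∈ famAt F m :=
        ⟨by rw [Finset.insert_erase hmt]; exact htF, hlt'⟩
      have hteL : ↑(t.erase m) ⊆ L₀ ∩ Set.Ioi m := by
        intro x hx
        rcases hx with hx
        rcases Finset.mem_erase.mp hx with ⟨hne, hxt⟩
        exact ⟨(htL hxt).1, lt_of_le_of_ne (t.min'_le x hxt) (Ne.symm hne)⟩
      obtain ⟨⟨u, hu, hinit⟩, hnot⟩ := hright ⟨hteF, hteL⟩
      refine ⟨⟨insert m u, hu.1, ?_, ?_⟩, ?_⟩
      · intro x hx
        rcases eq_or_ne x m with rfl | hxm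
        · exact Finset.mem_insert_self _ u
        · exact Finset.mem_insert_of_mem (hinit.1 (Finset.mem_erase.mpr ⟨hxm, hx⟩))
      · intro a ha b hb hab
        rcases Finset.mem_insert.mp ha with rfl | hau
        · exact hmt
        · have hma : m < a := hu.2 a hau
          have hbne : b ≠ m := fun h => lt_irrefl m (lt_of_lt_of_le hma (h ▸ hab))
          exact Finset.mem_of_mem_erase
            (hinit.2 a hau b (Finset.mem_erase.mpr ⟨hbne, hb⟩) hab)
      · intro htL'
        exact hnot ⟨by rw [Finset.insert_erase hmt]; exact htL', hlt'⟩

end Main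

/-- **Theorem 2.12.** If `ℱ` is a hereditary family of finite subsets of `M`
and `ℒ` is a `ξ`-uniform family on `M`, then for every infinite `M₁ ⊆ M` there
is an infinite `L ⊆ M₁` with either `ℒ_* ∩ [L]^{<ω} ⊆ ℱ` or
`ℱ ∩ [L]^{<ω} ⊆ ℒ* \ ℒ`. -/
theorem hereditary_dichotomy (M : Set ℕ) (hM : M.Infinite)
    (F : Set (Finset ℕ)) (hFM : F ⊆ FinSubs M) (hF : Hereditary F)
    (ξ : Ordinal.{0}) (hξ : ξ.card ≤ Cardinal.aleph0)
    (𝓛 : Set (Finset ℕ)) (h𝓛 : IsUniform ξ 𝓛 M)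
    (M₁ : Set ℕ) (hM₁ : M₁ ⊆ M) (hM₁inf : M₁.Infinite) :
    ∃ L : Set ℕ, L ⊆ M₁ ∧ L.Infinite ∧
      (famSub 𝓛 ∩ FinSubs L ⊆ F ∨ F ∩ FinSubs L ⊆ famStar 𝓛 \ 𝓛) := by
  obtain ⟨L, h1, h2, h3⟩ := mainT ξ 𝓛 M h𝓛 hM F hF M₁ hM₁ hM₁inf
  exact ⟨L, h1, h2, h3⟩
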